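/- arXiv:2410.03260 — 3 statements merged into one kernel-verified Lean document; each statement's English description precedes it below -/
import Mathlib

section
/- For every pair of coprime integers p, q with q ≥ 1 and 0 ≤ p < q, there exist x ∈ [1,∞) and a lift F : ℝ → ℝ of the circle homeomorphism Ê_x (i.e., F is continuous, strictly increasing, satisfies F(s+1) = F(s)+1 for all s, and induces Ê_x on ℝ/ℤ) such that F^q(0) = p. In particular the orbit of the marked point 0 mod 1 (the image of the endpoint t = 1) under Ê_x is periodic of minimal period q, and the rotation number of Ê_x equals p/q mod 1. -/
open Set Filter

/-- The chart `φ(t) = 1 − 1/t`, a homeomorphism from `[1,∞)` onto `[0,1)`. -/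
noncomputable def phiMap (t : ℝ) : ℝ := 1 - 1 / t

/-- The inverse chart `φ⁻¹(s) = 1/(1−s)`. -/
noncomputable def phiInvMap (s : ℝ) : ℝ := 1 / (1 - s)

/-- The Möbius transformation `g(t) = (y−1)t/(t−1)`. -/
noncomputable def gMob (y t : ℝ) : ℝ := (y - 1) * t / (t - 1)

/-- The Möbius transformation `h_x(t) = x((1−y)t + y)/((1−y)t + x)`. -/
noncomputable def hMob (y x t : ℝ) : ℝ := x * ((1 - y) * t + y) / ((1 - y) * t + x)

/-- The interval exchange `E_x` of `[1,∞)`: for `x ∈ (1,∞)` it is `g ∘ h_x` on `[1, x/(x−1))`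
and `h_x` on `[x/(x−1), ∞)`; for `x = 1` (and `x = ∞`) it is `h_∞(t) = (1−y)t + y`. -/
noncomputable def EMap (y x t : ℝ) : ℝ :=
  if x = 1 then (1 - y) * t + y
  else if t < x / (x - 1) then gMob y (hMob y x t) else hMob y x t

/-- The self-map `Ê_x` of the circle `ℝ/ℤ` induced by `φ ∘ E_x ∘ φ⁻¹ : [0,1) → [0,1)`. -/
noncomputable def EHat (y x : ℝ) : UnitAddCircle → UnitAddCircle :=
  fun z => ((phiMap (EMap y x (phiInvMap ((AddCircle.equivIco 1 0 z : ℝ))))) : UnitAddCircle)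

namespace RrotAux

/-- clamp to [0,1] -/
noncomputable def cl (r : ℝ) : ℝ := max 0 (min r 1)

lemma cl_nonneg (r : ℝ) : 0 ≤ cl r := le_max_left _ _
lemma cl_le_one (r : ℝ) : cl r ≤ 1 := max_le zero_le_one (min_le_right _ _)
lemma cl_eq_self {r : ℝ} (h0 : 0 ≤ r) (h1 : r ≤ 1) : cl r = r := by
  unfold cl; rw [min_eq_left h1, max_eq_right h0]
lemma cl_cont : Continuous cl := continuous_const.max (continuous_id.min continuous_const)

/-- denominator -/
noncomputable def Dd (y s : ℝ) : ℝ := 1 - y * cl s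

lemma Dd_pos {y : ℝ} (hy0 : 0 < y) (hy1 : y < 1) (s : ℝ) : 0 < Dd y s := by
  have h1 : cl s ≤ 1 := cl_le_one s
  have h0 : 0 ≤ cl s := cl_nonneg s
  have : y * cl s ≤ y * 1 := by nlinarith
  unfold Dd; nlinarith

lemma Dd_eq {y s : ℝ} (h0 : 0 ≤ s) (h1 : s ≤ 1) : Dd y s = 1 - y * s := by
  unfold Dd; rw [cl_eq_self h0 h1]

noncomputable def B1 (y c s : ℝ) : ℝ := (cl c + (1 - y) * s) / Dd y s
noncomputable def B2 (y c s : ℝ) : ℝ := 2 - ((1 - y) * (1 - cl c) + (1 - s)) / Dd y s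
noncomputable def Fl (y c s : ℝ) : ℝ := min (B1 y c s) (B2 y c s)

variable {y : ℝ}

lemma B2_sub_B1 (hy0 : 0 < y) (hy1 : y < 1) (c : ℝ) {s : ℝ} (h0 : 0 ≤ s) (h1 : s ≤ 1) :
    B2 y c s - B1 y c s = y * (1 - cl c - s) / (1 - y * s) := by
  have hD : Dd y s = 1 - y * s := Dd_eq h0 h1
  have hDpos : (0:ℝ) < 1 - y * s := hD ▸ Dd_pos hy0 hy1 s
  unfold B2 B1
  rw [hD]
  field_simp
  ring

lemma Fl_zero (hy0 : 0 < y) (hy1 : y < 1) (c : ℝ) : Fl y c 0 = cl c := by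
  have h := B2_sub_B1 hy0 hy1 c (le_refl (0:ℝ)) zero_le_one
  have hDpos : (0:ℝ) < 1 - y * 0 := by norm_num
  have hge : B1 y c 0 ≤ B2 y c 0 := by
    have : 0 ≤ y * (1 - cl c - 0) / (1 - y * 0) := by
      apply div_nonneg _ (le_of_lt hDpos)
      nlinarith [cl_le_one c]
    linarith
  have hB1 : B1 y c 0 = cl c := by
    unfold B1; rw [Dd_eq (le_refl (0:ℝ)) zero_le_one]; simp
  rw [Fl, min_eq_left hge, hB1]

lemma Fl_one (hy0 : 0 < y) (hy1 : y < 1) (c : ℝ) : Fl y c 1 = cl c + 1 := by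
  have h := B2_sub_B1 hy0 hy1 c zero_le_one (le_refl (1:ℝ))
  have hDpos : (0:ℝ) < 1 - y * 1 := by nlinarith
  have hle : B2 y c 1 ≤ B1 y c 1 := by
    have : y * (1 - cl c - 1) / (1 - y * 1) ≤ 0 := by
      apply div_nonpos_of_nonpos_of_nonneg _ (le_of_lt hDpos)
      nlinarith [cl_nonneg c]
    linarith
  have hB2 : B2 y c 1 = cl c + 1 := by
    unfold B2; rw [Dd_eq zero_le_one (le_refl (1:ℝ))]
    have : (1:ℝ) - y ≠ 0 := by nlinarith
    field_simp
    ring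
  rw [Fl, min_eq_right hle, hB2]

lemma Fl_strictMonoOn (hy0 : 0 < y) (hy1 : y < 1) (c : ℝ) : StrictMonoOn (Fl y c) (Icc (0:ℝ) 1) := by
  intro s ⟨hs0, hs1⟩ t ⟨ht0, ht1⟩ hst
  have hc0 : 0 ≤ cl c := cl_nonneg c
  have hc1 : cl c ≤ 1 := cl_le_one c
  have hDs : Dd y s = 1 - y * s := Dd_eq hs0 hs1
  have hDt : Dd y t = 1 - y * t := Dd_eq ht0 ht1
  have hDspos : (0:ℝ) < 1 - y * s := hDs ▸ Dd_pos hy0 hy1 s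
  have hDtpos : (0:ℝ) < 1 - y * t := hDt ▸ Dd_pos hy0 hy1 t
  have h1 : B1 y c s < B1 y c t := by
    unfold B1; rw [hDs, hDt, div_lt_div_iff₀ hDspos hDtpos]
    nlinarith [mul_nonneg (mul_nonneg hc0 hy0.le) (sub_nonneg.mpr hst.le),
      mul_pos (by linarith : (0:ℝ) < 1 - y) (by linarith : (0:ℝ) < t - s)]
  have h2 : B2 y c s < B2 y c t := by
    unfold B2; rw [hDs, hDt]
    have : ((1 - y) * (1 - cl c) + (1 - t)) / (1 - y * t)
        < ((1 - y) * (1 - cl c) + (1 - s)) / (1 - y * s) := by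
      rw [div_lt_div_iff₀ hDtpos hDspos]
      have e1 : (0:ℝ) < 1 - (1 - cl c) * y := by nlinarith
      have e2 : (0:ℝ) < (1 - y) * (1 - (1 - cl c) * y) :=
        mul_pos (by linarith) e1
      nlinarith [mul_pos e2 (by linarith : (0:ℝ) < t - s)]
    linarith
  exact min_lt_min h1 h2

lemma Fl_cont (hy0 : 0 < y) (hy1 : y < 1) : Continuous (fun p : ℝ × ℝ => Fl y p.1 p.2) := by
  have hD : Continuous (fun p : ℝ × ℝ => Dd y p.2) :=
    continuous_const.sub (continuous_const.mul (cl_cont.comp continuous_snd))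
  have hDne : ∀ p : ℝ × ℝ, Dd y p.2 ≠ 0 := fun p => ne_of_gt (Dd_pos hy0 hy1 p.2)
  have hcl1 : Continuous (fun p : ℝ × ℝ => cl p.1) := cl_cont.comp continuous_fst
  have h1 : Continuous (fun p : ℝ × ℝ => B1 y p.1 p.2) := by
    unfold B1
    exact (hcl1.add (continuous_const.mul continuous_snd)).div hD hDne
  have h2 : Continuous (fun p : ℝ × ℝ => B2 y p.1 p.2) := by
    unfold B2
    exact continuous_const.sub
      (((continuous_const.mul (continuous_const.sub hcl1)).add
        (continuous_const.sub continuous_snd)).div hD hDne)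
  exact h1.min h2

noncomputable def Fg (y c s : ℝ) : ℝ := ⌊s⌋ + Fl y c (Int.fract s)

lemma Fg_int (hy0 : 0 < y) (hy1 : y < 1) (c : ℝ) (n : ℤ) : Fg y c (n : ℝ) = n + cl c := by
  unfold Fg
  rw [Int.floor_intCast, Int.fract_intCast, Fl_zero hy0 hy1]

lemma Fg_add_int (c s : ℝ) (n : ℤ) : Fg y c (s + n) = Fg y c s + n := by
  unfold Fg
  rw [Int.floor_add_intCast, Int.fract_add_intCast]
  push_cast; ring

lemma Fl_lt (hy0 : 0 < y) (hy1 : y < 1) (c : ℝ) {s : ℝ} (h0 : 0 ≤ s) (h1 : s < 1) :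
    cl c ≤ Fl y c s ∧ Fl y c s < cl c + 1 := by
  constructor
  · rcases eq_or_lt_of_le h0 with h | h
    · rw [← h, Fl_zero hy0 hy1]
    · have := Fl_strictMonoOn hy0 hy1 c (by constructor <;> norm_num)
        ⟨h0, le_of_lt h1⟩ h
      rw [Fl_zero hy0 hy1] at this; linarith
  · have := Fl_strictMonoOn hy0 hy1 c ⟨h0, le_of_lt h1⟩ (by constructor <;> norm_num) h1
    rw [Fl_one hy0 hy1] at this; linarith

lemma Fg_strictMono (hy0 : 0 < y) (hy1 : y < 1) (c : ℝ) : StrictMono (Fg y c) := by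
  intro s t hst
  have hfs := Fl_lt hy0 hy1 c (Int.fract_nonneg s) (Int.fract_lt_one s)
  have hft := Fl_lt hy0 hy1 c (Int.fract_nonneg t) (Int.fract_lt_one t)
  have hfl : ⌊s⌋ ≤ ⌊t⌋ := Int.floor_le_floor (le_of_lt hst)
  rcases eq_or_lt_of_le hfl with h | h
  · have hfr : Int.fract s < Int.fract t := by
      unfold Int.fract; rw [h]; linarith
    have := Fl_strictMonoOn hy0 hy1 c ⟨Int.fract_nonneg s, le_of_lt (Int.fract_lt_one s)⟩
      ⟨Int.fract_nonneg t, le_of_lt (Int.fract_lt_one t)⟩ hfr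
    unfold Fg; rw [h]; linarith
  · have : (⌊s⌋ : ℝ) + 1 ≤ ⌊t⌋ := by exact_mod_cast Int.add_one_le_iff.mpr h
    unfold Fg; linarith [hfs.2, hft.1]

lemma Fg_cont (hy0 : 0 < y) (hy1 : y < 1) : Continuous (fun p : ℝ × ℝ => Fg y p.1 p.2) := by
  have hG : ∀ m : ℤ, Continuous (fun p : ℝ × ℝ => (m : ℝ) + Fl y p.1 (p.2 - m)) := by
    intro m
    exact continuous_const.add
      ((Fl_cont hy0 hy1).comp (continuous_fst.prodMk (continuous_snd.sub continuous_const)))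
  have hagree : ∀ m : ℤ, ∀ p : ℝ × ℝ, p.2 ∈ Icc (m : ℝ) (m + 1) →
      Fg y p.1 p.2 = (m : ℝ) + Fl y p.1 (p.2 - m) := by
    rintro m ⟨c, s⟩ ⟨h1, h2⟩
    rcases eq_or_lt_of_le h2 with h | h
    · have hs : s = (m : ℝ) + 1 := h
      subst hs
      have h1' : ((m : ℝ) + 1) = ((m + 1 : ℤ) : ℝ) := by push_cast; ring
      simp only [h1']
      rw [Fg_int hy0 hy1]
      have : ((m + 1 : ℤ) : ℝ) - (m : ℝ) = 1 := by push_cast; ring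
      rw [this, Fl_one hy0 hy1]
      push_cast; ring
    · have hfl : ⌊s⌋ = m := Int.floor_eq_iff.mpr ⟨h1, h⟩
      have hfr : Int.fract s = s - (m : ℝ) := by rw [Int.fract, hfl]
      unfold Fg
      rw [hfl, hfr]
  rw [continuous_iff_continuousAt]
  rintro ⟨c0, s0⟩
  set n : ℤ := ⌊s0⌋ with hn
  by_cases hint : s0 = (n : ℝ)
  · -- integer point: glue on two strips
    have hcw1 : ContinuousWithinAt (fun p : ℝ × ℝ => Fg y p.1 p.2)
        (univ ×ˢ Icc ((n : ℝ) - 1) (n : ℝ)) (c0, s0) := by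
      apply ((hG (n - 1)).continuousAt.continuousWithinAt).congr
      · rintro ⟨c, s⟩ ⟨-, hs⟩
        have : s ∈ Icc (((n - 1 : ℤ)) : ℝ) (((n - 1 : ℤ)) + 1) := by
          push_cast; push_cast at hs; exact ⟨hs.1, by linarith [hs.2]⟩
        simpa using (hagree (n - 1) (c, s) this)
      · have : s0 ∈ Icc (((n - 1 : ℤ)) : ℝ) (((n - 1 : ℤ)) + 1) := by
          rw [hint]; push_cast; constructor <;> linarith
        simpa using (hagree (n - 1) (c0, s0) this)
    have hcw2 : ContinuousWithinAt (fun p : ℝ × ℝ => Fg y p.1 p.2)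
        (univ ×ˢ Icc (n : ℝ) ((n : ℝ) + 1)) (c0, s0) := by
      apply ((hG n).continuousAt.continuousWithinAt).congr
      · rintro ⟨c, s⟩ ⟨-, hs⟩
        exact hagree n (c, s) hs
      · exact hagree n (c0, s0) ⟨by rw [hint], by rw [hint]; linarith⟩
    have hcw := hcw1.union hcw2
    apply hcw.continuousAt
    rw [← prod_union]
    have hsub : (univ ×ˢ Ioo ((n:ℝ) - 1) ((n:ℝ) + 1) : Set (ℝ × ℝ)) ⊆
        univ ×ˢ (Icc ((n : ℝ) - 1) (n : ℝ) ∪ Icc (n : ℝ) ((n : ℝ) + 1)) := by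
      rintro ⟨c, s⟩ ⟨-, hs⟩
      refine ⟨trivial, ?_⟩
      rcases le_total s (n : ℝ) with h | h
      · exact Or.inl ⟨le_of_lt hs.1, h⟩
      · exact Or.inr ⟨h, le_of_lt hs.2⟩
    apply mem_of_superset _ hsub
    apply (isOpen_univ.prod isOpen_Ioo).mem_nhds
    exact ⟨trivial, by rw [hint]; constructor <;> linarith⟩
  · -- non-integer point: locally equal to G n
    have h1 : (n : ℝ) < s0 := lt_of_le_of_ne (Int.floor_le s0) (Ne.symm hint)
    have h2 : s0 < (n : ℝ) + 1 := Int.lt_floor_add_one s0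
    have hev : (fun p : ℝ × ℝ => Fg y p.1 p.2) =ᶠ[nhds (c0, s0)]
        (fun p : ℝ × ℝ => (n : ℝ) + Fl y p.1 (p.2 - n)) := by
      apply Filter.eventuallyEq_of_mem
        ((isOpen_univ.prod isOpen_Ioo).mem_nhds ⟨trivial, h1, h2⟩ :
          (univ ×ˢ Ioo ((n:ℝ)) ((n:ℝ) + 1) : Set (ℝ × ℝ)) ∈ nhds (c0, s0))
      rintro ⟨c, s⟩ ⟨-, hs⟩
      exact hagree n (c, s) ⟨le_of_lt hs.1, le_of_lt hs.2⟩
    exact ((hG n).continuousAt).congr hev.symm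


lemma Fg_cont_s (hy0 : 0 < y) (hy1 : y < 1) (c : ℝ) : Continuous (Fg y c) :=
  (Fg_cont hy0 hy1).comp (continuous_const.prodMk continuous_id)

lemma Fg_surj (hy0 : 0 < y) (hy1 : y < 1) (c : ℝ) : Function.Surjective (Fg y c) := by
  intro t
  have h1 : Fg y c ((⌊t⌋ - 1 : ℤ) : ℝ) ≤ t := by
    rw [Fg_int hy0 hy1]
    have := Int.floor_le t
    have := cl_le_one c
    push_cast; linarith
  have h2 : t ≤ Fg y c ((⌊t⌋ + 1 : ℤ) : ℝ) := by
    rw [Fg_int hy0 hy1]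
    have := Int.lt_floor_add_one t
    have := cl_nonneg c
    push_cast; linarith
  have hle : ((⌊t⌋ - 1 : ℤ) : ℝ) ≤ ((⌊t⌋ + 1 : ℤ) : ℝ) := by push_cast; linarith
  obtain ⟨s, -, hs⟩ := intermediate_value_Icc hle (Fg_cont_s hy0 hy1 c).continuousOn ⟨h1, h2⟩
  exact ⟨s, hs⟩

set_option maxHeartbeats 2000000 in
lemma lift_key (hy0 : 0 < y) (hy1 : y < 1) {c : ℝ} (hc0 : 0 ≤ c) (hc1 : c < 1)
    {u : ℝ} (hu0 : 0 ≤ u) (hu1 : u < 1) :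
    ∃ m : ℤ, Fl y c u = phiMap (EMap y (1 - c)⁻¹ (phiInvMap u)) + m := by
  have h1c : (0:ℝ) < 1 - c := by linarith
  have h1u : (0:ℝ) < 1 - u := by linarith
  have hDu : Dd y u = 1 - y * u := Dd_eq hu0 hu1.le
  have h1yu : (0:ℝ) < 1 - y * u := hDu ▸ Dd_pos hy0 hy1 u
  have hclc : cl c = c := cl_eq_self hc0 hc1.le
  have hsub := B2_sub_B1 hy0 hy1 c hu0 hu1.le
  rw [hclc] at hsub
  have ht : phiInvMap u = (1 - u)⁻¹ := by unfold phiInvMap; rw [one_div]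
  by_cases hc : c = 0
  · subst hc
    refine ⟨0, ?_⟩
    have hx : ((1:ℝ) - 0)⁻¹ = 1 := by norm_num
    rw [hx]
    have hFl : Fl y 0 u = B1 y 0 u := by
      apply min_eq_left
      have hge : (0:ℝ) ≤ y * (1 - 0 - u) / (1 - y * u) := by
        apply div_nonneg _ h1yu.le
        nlinarith
      linarith [hsub]
    unfold EMap
    rw [if_pos rfl, ht]
    have hden : (1 - y) * (1 - u)⁻¹ + y = (1 - y * u) / (1 - u) := by
      field_simp; ring
    rw [hFl, hden]
    unfold B1 phiMap
    rw [hDu, cl_eq_self le_rfl zero_le_one, one_div_div]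
    push_cast
    field_simp
    ring
  · have hcpos : 0 < c := lt_of_le_of_ne hc0 (Ne.symm hc)
    obtain ⟨x, hxdef⟩ : ∃ x : ℝ, x = (1 - c)⁻¹ := ⟨_, rfl⟩
    rw [← hxdef]
    have hxpos : 0 < x := hxdef ▸ inv_pos.mpr h1c
    have hxne0 : x ≠ 0 := ne_of_gt hxpos
    have hxc : x * (1 - c) = 1 := hxdef ▸ inv_mul_cancel₀ (ne_of_gt h1c)
    have hx1 : 1 < x := by nlinarith
    have hxne1 : x ≠ 1 := ne_of_gt hx1
    have hx1ne : x - 1 ≠ 0 := sub_ne_zero.mpr hxne1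
    have hc_eq : c = (x - 1) / x := by
      rw [eq_div_iff hxne0]; nlinarith
    have hxx : x / (x - 1) = 1 / c := by
      rw [hc_eq, one_div_div]
    have hcond : phiInvMap u < x / (x - 1) ↔ u < 1 - c := by
      rw [hxx, ht, inv_eq_one_div, div_lt_div_iff₀ h1u hcpos]
      constructor <;> intro <;> linarith
    have hhden : (0:ℝ) < (1 - y) + x * (1 - u) := by nlinarith
    have hh : hMob y x (phiInvMap u) = x * (1 - y * u) / ((1 - y) + x * (1 - u)) := by
      unfold hMob
      rw [ht]
      have e1 : (1 - y) * (1 - u)⁻¹ + y = (1 - y * u) / (1 - u) := by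
        field_simp
        ring
      have e2 : (1 - y) * (1 - u)⁻¹ + x = ((1 - y) + x * (1 - u)) / (1 - u) := by
        field_simp
      rw [e1, e2, mul_div_assoc', div_div_div_cancel_right₀ (ne_of_gt h1u)]
    by_cases hu : u < 1 - c
    · refine ⟨0, ?_⟩
      have hxu : x * u < 1 := by nlinarith [mul_lt_mul_of_pos_left hu hxpos]
      have hne3 : (1:ℝ) - x * u ≠ 0 := by nlinarith
      have hgh : gMob y (x * (1 - y * u) / ((1 - y) + x * (1 - u)))
          = x * (1 - y * u) / (1 - x * u) := by
        unfold gMob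
        have hs2 : x * (1 - y * u) / ((1 - y) + x * (1 - u)) - 1
            = (1 - y) * (x * u - 1) / ((1 - y) + x * (1 - u)) := by
          field_simp; ring
        rw [hs2]
        have hne2 : (1 - y) * (x * u - 1) ≠ 0 := by nlinarith
        have hne2' : (1 - y) * (x * u - 1) / ((1 - y) + x * (1 - u)) ≠ 0 :=
          div_ne_zero hne2 (ne_of_gt hhden)
        rw [mul_div_assoc', div_div_div_cancel_right₀ (ne_of_gt hhden), div_eq_div_iff hne2 hne3]
        ring
      have hphi : phiMap (x * (1 - y * u) / (1 - x * u)) = B1 y c u := by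
        unfold phiMap B1
        rw [hDu, hclc, hc_eq]
        have hnum : x * (1 - y * u) ≠ 0 := mul_ne_zero hxne0 (ne_of_gt h1yu)
        field_simp
        ring
      have hFl : Fl y c u = B1 y c u := by
        apply min_eq_left
        have hge : (0:ℝ) ≤ y * (1 - c - u) / (1 - y * u) := by
          apply div_nonneg _ h1yu.le
          nlinarith
        linarith [hsub]
      unfold EMap
      rw [if_neg hxne1, if_pos (hcond.mpr hu), hh, hgh, hphi, hFl]
      push_cast; ring
    · refine ⟨1, ?_⟩
      push_neg at hu
      have hphi2 : phiMap (x * (1 - y * u) / ((1 - y) + x * (1 - u))) = B2 y c u - 1 := by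
        unfold phiMap B2
        rw [hDu, hclc, hc_eq]
        have hnum : x * (1 - y * u) ≠ 0 := mul_ne_zero hxne0 (ne_of_gt h1yu)
        field_simp
        ring
      have hFl : Fl y c u = B2 y c u := by
        apply min_eq_right
        have hle2 : y * (1 - c - u) / (1 - y * u) ≤ 0 := by
          apply div_nonpos_of_nonpos_of_nonneg _ h1yu.le
          nlinarith
        linarith [hsub]
      unfold EMap
      rw [if_neg hxne1, if_neg (by rw [hcond]; linarith), hh, hphi2, hFl]
      push_cast; ring

lemma lift_of (hy0 : 0 < y) (hy1 : y < 1) {c : ℝ} (hc0 : 0 ≤ c) (hc1 : c < 1) (s : ℝ) :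
    ((Fg y c s : ℝ) : UnitAddCircle) = EHat y (1 - c)⁻¹ ((s : ℝ) : UnitAddCircle) := by
  have hu : ((AddCircle.equivIco 1 0 ((s : ℝ) : UnitAddCircle) : ℝ)) = Int.fract s := by
    rw [AddCircle.coe_equivIco_mk_apply]; simp
  unfold EHat
  rw [hu]
  obtain ⟨m, hm⟩ := lift_key hy0 hy1 hc0 hc1 (Int.fract_nonneg s) (Int.fract_lt_one s)
  have heq : Fg y c s
      = phiMap (EMap y (1 - c)⁻¹ (phiInvMap (Int.fract s))) + ((⌊s⌋ + m : ℤ) : ℝ) := by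
    unfold Fg; rw [hm]; push_cast; ring
  rw [heq]
  have hz : ((((⌊s⌋ + m : ℤ) : ℝ)) : AddCircle (1:ℝ)) = 0 := by
    rw [QuotientAddGroup.eq_zero_iff]
    exact AddSubgroup.mem_zmultiples_iff.mpr ⟨⌊s⌋ + m, by simp⟩
  have : ((phiMap (EMap y (1 - c)⁻¹ (phiInvMap (Int.fract s))) + ((⌊s⌋ + m : ℤ) : ℝ) : ℝ)
      : AddCircle (1:ℝ))
      = (phiMap (EMap y (1 - c)⁻¹ (phiInvMap (Int.fract s))) : ℝ) + (((⌊s⌋ + m : ℤ) : ℝ) :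
        AddCircle (1:ℝ)) := by
    push_cast; rfl
  rw [this, hz, add_zero]

end RrotAux

open RrotAux

/-- A lift of an orientation-preserving circle homeomorphism: a continuous strictly increasing
surjection `F : ℝ → ℝ` commuting with the unit translation. -/
def IsCircleLift (F : ℝ → ℝ) : Prop :=
  Continuous F ∧ StrictMono F ∧ Function.Surjective F ∧ ∀ s : ℝ, F (s + 1) = F s + 1

/-- `F` is a lift of the circle self-map `T`; in particular `T` is then a well-defined
orientation-preserving homeomorphism of `ℝ/ℤ`. -/
def IsLiftOf (F : ℝ → ℝ) (T : UnitAddCircle → UnitAddCircle) : Prop :=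
  IsCircleLift F ∧ ∀ s : ℝ, ((F s : ℝ) : UnitAddCircle) = T ((s : ℝ) : UnitAddCircle)

/-- `τ` is the translation number of the lift `F`. -/
def HasTransNum (F : ℝ → ℝ) (τ : ℝ) : Prop :=
  ∀ x : ℝ, Tendsto (fun n : ℕ => (F^[n] x - x) / (n : ℝ)) atTop (nhds τ)

/-- For every pair of coprime integers `0 ≤ p < q`, `q ≥ 1`, there are `x ∈ [1,∞)` and a lift
`F` of `Ê_x` with `F^q(0) = p`; in particular the orbit of the marked point `0 mod 1` under
`Ê_x` is periodic of minimal period `q` and the rotation number of `Ê_x` is `p/q mod 1`. -/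
theorem realization_of_rational_rotation_numbers (θ : ℝ) (hθ : 0 < θ)
    (y : ℝ) (hy : y = 1 - Real.exp (-θ))
    (p q : ℕ) (hq : 1 ≤ q) (hp : p < q) (hpq : Nat.Coprime p q) :
    ∃ x ∈ Ici (1:ℝ), ∃ F : ℝ → ℝ, IsLiftOf F (EHat y x) ∧
      F^[q] 0 = (p : ℝ) ∧
      HasTransNum F ((p : ℝ) / (q : ℝ)) ∧
      ∀ k : ℕ, 0 < k → k < q → ∀ m : ℤ, F^[k] 0 ≠ (m : ℝ) := by
  have hy0 : 0 < y := by
    rw [hy]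
    have h2 : Real.exp (-θ) < 1 := by
      rw [Real.exp_lt_one_iff]
      linarith
    linarith
  have hy1 : y < 1 := by
    rw [hy]
    linarith [Real.exp_pos (-θ)]
  -- the function c ↦ F_c^[q](0)
  have hWcont : ∀ k : ℕ, Continuous (fun c => (Fg y c)^[k] 0) := by
    intro k
    induction k with
    | zero => simpa using continuous_const
    | succ k ih =>
      have : (fun c => (Fg y c)^[k + 1] 0) = fun c => Fg y c ((Fg y c)^[k] 0) := by
        funext c; rw [Function.iterate_succ_apply']
      rw [this]
      exact (Fg_cont hy0 hy1).comp (continuous_id.prodMk ih)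
  have hW0 : ∀ k : ℕ, (Fg y 0)^[k] 0 = 0 := by
    intro k
    induction k with
    | zero => simp
    | succ k ih =>
      rw [Function.iterate_succ_apply', ih]
      have h0 : ((0:ℝ)) = (((0:ℤ)):ℝ) := by norm_num
      rw [h0, Fg_int hy0 hy1]
      push_cast
      rw [cl_eq_self le_rfl zero_le_one]
      norm_num
  have hW1 : ∀ k : ℕ, (Fg y 1)^[k] 0 = k := by
    intro k
    induction k with
    | zero => simp
    | succ k ih =>
      rw [Function.iterate_succ_apply', ih]
      have h0 : ((k:ℝ)) = (((k:ℤ)):ℝ) := by push_cast; ring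
      rw [h0, Fg_int hy0 hy1, cl_eq_self zero_le_one le_rfl]
      push_cast; ring
  obtain ⟨c, hcmem, hc⟩ := intermediate_value_Icc zero_le_one (hWcont q).continuousOn
    (show (p:ℝ) ∈ Icc ((Fg y 0)^[q] 0) ((Fg y 1)^[q] 0) by
      rw [hW0 q, hW1 q]
      exact ⟨Nat.cast_nonneg p, by exact_mod_cast hp.le⟩)
  replace hc : (Fg y c)^[q] 0 = (p:ℝ) := hc
  have hc0 : 0 ≤ c := hcmem.1
  have hc1 : c < 1 := by
    rcases lt_or_eq_of_le hcmem.2 with h | h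
    · exact h
    · exfalso
      rw [h] at hc
      rw [hW1 q] at hc
      have : q = p := by exact_mod_cast hc
      omega
  have h1c : (0:ℝ) < 1 - c := by linarith
  -- the lift as a CircleDeg1Lift
  set F : ℝ → ℝ := Fg y c with hF
  have hmono : StrictMono F := Fg_strictMono hy0 hy1 c
  have haddone : ∀ s : ℝ, F (s + 1) = F s + 1 := by
    intro s
    have := Fg_add_int (y := y) c s 1
    push_cast at this
    exact this
  set f : CircleDeg1Lift := ⟨⟨F, hmono.monotone⟩, haddone⟩ with hfdef
  have hcoe : ⇑f = F := rfl
  have hfq : (f ^ q) 0 = 0 + ((p:ℤ):ℝ) := by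
    rw [CircleDeg1Lift.coe_pow]
    simp only [hcoe]
    rw [hc]
    push_cast; ring
  have htau : f.translationNumber = (p : ℝ) / (q : ℝ) := by
    rw [f.translationNumber_of_map_pow_eq_add_int hfq (by omega)]
    push_cast; ring
  refine ⟨(1 - c)⁻¹, ?_, F, ⟨⟨?_, hmono, Fg_surj hy0 hy1 c, haddone⟩, ?_⟩, hc, ?_, ?_⟩
  · -- x ∈ Ici 1
    have := inv_pos.mpr h1c
    have hx : (1 - c) * (1 - c)⁻¹ = 1 := mul_inv_cancel₀ (ne_of_gt h1c)
    simp only [mem_Ici]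
    nlinarith
  · exact Fg_cont_s hy0 hy1 c
  · exact fun s => lift_of hy0 hy1 hc0 hc1 s
  · -- translation number
    intro z
    have h := f.tendsto_translationNumber z
    rw [htau] at h
    refine h.congr fun n => ?_
    rw [CircleDeg1Lift.coe_pow]
    rfl
  · -- minimality
    intro k hk0 hkq m hFk
    have hfk : (f ^ k) 0 = 0 + ((m:ℤ):ℝ) := by
      rw [CircleDeg1Lift.coe_pow]
      simp only [hcoe]
      rw [hFk]
      ring
    have h2 := f.translationNumber_of_map_pow_eq_add_int hfk hk0
    rw [htau] at h2
    have hkne : ((k:ℝ)) ≠ 0 := Nat.cast_ne_zero.mpr (by omega)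
    have hqne : ((q:ℝ)) ≠ 0 := Nat.cast_ne_zero.mpr (by omega)
    rw [div_eq_div_iff hqne hkne] at h2
    have hz : (p:ℤ) * k = m * q := by exact_mod_cast h2
    have hm0 : 0 ≤ m := by
      by_contra hneg
      push_neg at hneg
      have hq0 : (0:ℤ) < q := by exact_mod_cast hq
      nlinarith [hz, mul_nonneg (Int.ofNat_nonneg p) (Int.ofNat_nonneg k)]
    obtain ⟨m', rfl⟩ : ∃ m' : ℕ, m = (m' : ℤ) := ⟨m.toNat, (Int.toNat_of_nonneg hm0).symm⟩
    have hnat : p * k = m' * q := by exact_mod_cast hz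
    have hdvd : q ∣ p * k := Dvd.intro_left m' hnat.symm
    have hqk : q ∣ k := (Nat.Coprime.symm hpq).dvd_of_dvd_mul_left hdvd
    have := Nat.le_of_dvd hk0 hqk
    omega
end

section
/- Let x₁, x₂ ∈ (1,∞), and let p, q be coprime integers with q ≥ 1. Suppose that for i = 1, 2 there is a lift F_i : ℝ → ℝ of Ê_{x_i} (continuous, strictly increasing, with F_i(s+1) = F_i(s)+1 for all s, inducing Ê_{x_i} on ℝ/ℤ) satisfying F_i^q(0) = p — that is, the marked point 0 mod 1 has a periodic orbit of the same rotation number p/q (hence of the same cyclic order) under both Ê_{x₁} and Ê_{x₂}. Then x₁ = x₂. -/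
open Set Filter

namespace RigidityAux

lemma phiMap_lt_one {u : ℝ} (hu : 0 < u) : phiMap u < 1 := by
  unfold phiMap; have : 0 < 1/u := by positivity
  linarith

lemma phiMap_lt_phiMap {a b : ℝ} (ha : 0 < a) (h : a < b) : phiMap a < phiMap b := by
  unfold phiMap
  have := one_div_lt_one_div_of_lt ha h
  linarith

lemma phiMap_le_phiMap {a b : ℝ} (ha : 0 < a) (h : a ≤ b) : phiMap a ≤ phiMap b := by
  rcases eq_or_lt_of_le h with rfl | h'
  · exact le_rfl
  · exact (phiMap_lt_phiMap ha h').le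

lemma phiMap_one : phiMap 1 = 0 := by norm_num [phiMap]

lemma phiMap_pos {u : ℝ} (hu : 1 < u) : 0 < phiMap u := by
  have := phiMap_lt_phiMap one_pos hu; rw [phiMap_one] at this; exact this

lemma phiMap_nonneg {u : ℝ} (hu : 1 ≤ u) : 0 ≤ phiMap u := by
  have := phiMap_le_phiMap one_pos hu; rw [phiMap_one] at this; exact this

lemma one_le_phiInvMap {s : ℝ} (h0 : 0 ≤ s) (h1 : s < 1) : 1 ≤ phiInvMap s := by
  unfold phiInvMap; rw [le_div_iff₀ (by linarith)]; linarith

lemma phiMap_phiInvMap {s : ℝ} (h1 : s < 1) : phiMap (phiInvMap s) = s := by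
  unfold phiMap phiInvMap
  rw [one_div_one_div]; ring

lemma phiInvMap_zero : phiInvMap 0 = 1 := by norm_num [phiInvMap]

lemma one_lt_xp {x : ℝ} (hx : 1 < x) : 1 < x/(x-1) := by
  rw [lt_div_iff₀ (by linarith)]; linarith

lemma xp_anti {x₁ x₂ : ℝ} (h1 : 1 < x₁) (h12 : x₁ < x₂) : x₂/(x₂-1) < x₁/(x₁-1) := by
  rw [div_lt_div_iff₀ (by linarith) (by linarith)]; nlinarith

lemma EMap_first {y x t : ℝ} (hy1 : y < 1) (hx : 1 < x) (ht : 1 ≤ t) (htx : t < x/(x-1)) :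
    EMap y x t = x*((1-y)*t+y)/(x-(x-1)*t) := by
  have hD : 0 < x - (x-1)*t := by
    have := (lt_div_iff₀ (by linarith : (0:ℝ) < x - 1)).1 htx
    linarith
  have hM : 0 < (1-y)*t + x := by nlinarith
  rw [EMap, if_neg (by intro h; rw [h] at hx; exact lt_irrefl _ hx), if_pos htx, gMob, hMob]
  have key : x*((1-y)*t+y)/((1-y)*t+x) - 1 = (-((1-y)*(x-(x-1)*t)))/((1-y)*t+x) := by
    field_simp; ring
  rw [key]
  have h1y : (1:ℝ) - y ≠ 0 := by linarith
  field_simp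
  ring

lemma EMap_second {y x t : ℝ} (hx : 1 < x) (htx : x/(x-1) ≤ t) :
    EMap y x t = x*((1-y)*t+y)/((1-y)*t+x) := by
  rw [EMap, if_neg (by intro h; rw [h] at hx; exact lt_irrefl _ hx), if_neg (not_lt.2 htx), hMob]

lemma EMap_one {y x : ℝ} (hy1 : y < 1) (hx : 1 < x) : EMap y x 1 = x := by
  rw [EMap_first hy1 hx le_rfl (one_lt_xp hx)]
  rw [show x - (x-1)*1 = (1:ℝ) by ring, div_one]; ring

lemma EMap_first_ge {y x t : ℝ} (hy0 : 0 < y) (hy1 : y < 1) (hx : 1 < x)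
    (ht : 1 ≤ t) (htx : t < x/(x-1)) : x ≤ EMap y x t := by
  rw [EMap_first hy1 hx ht htx]
  have hD : 0 < x - (x-1)*t := by
    have := (lt_div_iff₀ (by linarith : (0:ℝ) < x - 1)).1 htx
    linarith
  rw [le_div_iff₀ hD]
  nlinarith [mul_nonneg (mul_nonneg (by linarith : (0:ℝ) ≤ x) (by linarith : (0:ℝ) ≤ x - y))
    (by linarith : (0:ℝ) ≤ t - 1)]

lemma EMap_second_ge_one {y x t : ℝ} (hy0 : 0 < y) (hy1 : y < 1) (hx : 1 < x)
    (htx : x/(x-1) ≤ t) : 1 ≤ EMap y x t := by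
  have ht1 : 1 < t := lt_of_lt_of_le (one_lt_xp hx) htx
  have hM : 0 < (1-y)*t + x := by nlinarith
  have htx' : x ≤ t*(x-1) := by
    have := (div_le_iff₀ (by linarith : (0:ℝ) < x - 1)).1 htx
    linarith
  rw [EMap_second hx htx, le_div_iff₀ hM]
  nlinarith [mul_nonneg (by linarith : (0:ℝ) ≤ 1-y) (by linarith : (0:ℝ) ≤ t*(x-1) - x)]

lemma EMap_second_lt_x {y x t : ℝ} (hy0 : 0 < y) (hy1 : y < 1) (hx : 1 < x)
    (htx : x/(x-1) ≤ t) : EMap y x t < x := by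
  have ht1 : 1 < t := lt_of_lt_of_le (one_lt_xp hx) htx
  have hM : 0 < (1-y)*t + x := by nlinarith
  rw [EMap_second hx htx, div_lt_iff₀ hM]
  nlinarith [mul_pos (by linarith : (0:ℝ) < x) (by linarith : (0:ℝ) < x - y)]

lemma EMap_second_lt_t {y x t : ℝ} (hy0 : 0 < y) (hy1 : y < 1) (hx : 1 < x)
    (htx : x/(x-1) ≤ t) : EMap y x t < t := by
  have ht1 : 1 < t := lt_of_lt_of_le (one_lt_xp hx) htx
  have hM : 0 < (1-y)*t + x := by nlinarith
  rw [EMap_second hx htx, div_lt_iff₀ hM]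
  nlinarith [mul_pos (mul_pos hy0 (by linarith : (0:ℝ) < x)) (by linarith : (0:ℝ) < t - 1),
    mul_pos (mul_pos (by linarith : (0:ℝ) < 1 - y) (by linarith : (0:ℝ) < t)) (by linarith : (0:ℝ) < t)]

lemma EMap_first_mono {y x₁ x₂ t : ℝ} (hy0 : 0 < y) (hy1 : y < 1)
    (hx₁ : 1 < x₁) (h12 : x₁ < x₂) (ht : 1 ≤ t) (ht₂ : t < x₂/(x₂-1)) :
    EMap y x₁ t < EMap y x₂ t := by
  have ht₁ : t < x₁/(x₁-1) := lt_trans ht₂ (xp_anti hx₁ h12)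
  have hD₁ : 0 < x₁ - (x₁-1)*t := by
    have := (lt_div_iff₀ (by linarith : (0:ℝ) < x₁ - 1)).1 ht₁; linarith
  have hD₂ : 0 < x₂ - (x₂-1)*t := by
    have := (lt_div_iff₀ (by linarith : (0:ℝ) < x₂ - 1)).1 ht₂; linarith
  have hN : 0 < (1-y)*t + y := by nlinarith
  rw [EMap_first hy1 hx₁ ht ht₁, EMap_first hy1 (by linarith) ht ht₂, div_lt_div_iff₀ hD₁ hD₂]
  nlinarith [mul_pos (mul_pos hN (by linarith : (0:ℝ) < t)) (by linarith : (0:ℝ) < x₂ - x₁)]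

lemma EMap_second_mono {y x₁ x₂ t : ℝ} (hy0 : 0 < y) (hy1 : y < 1)
    (hx₁ : 1 < x₁) (h12 : x₁ < x₂) (ht₁ : x₁/(x₁-1) ≤ t) :
    EMap y x₁ t < EMap y x₂ t := by
  have ht₂ : x₂/(x₂-1) ≤ t := le_trans (xp_anti hx₁ h12).le ht₁
  have ht1 : 1 < t := lt_of_lt_of_le (one_lt_xp hx₁) ht₁
  have hM₁ : 0 < (1-y)*t + x₁ := by nlinarith
  have hM₂ : 0 < (1-y)*t + x₂ := by nlinarith
  rw [EMap_second hx₁ ht₁, EMap_second (by linarith) ht₂, div_lt_div_iff₀ hM₁ hM₂]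
  have hB : 0 < (1-y)*t := mul_pos (by linarith) (by linarith)
  nlinarith [mul_pos (mul_pos hB (by nlinarith : (0:ℝ) < (1-y)*t + y)) (by linarith : (0:ℝ) < x₂ - x₁)]

end RigidityAux

noncomputable def DFun (y x s : ℝ) : ℝ :=
  if phiInvMap s < x/(x-1) then phiMap (EMap y x (phiInvMap s))
  else phiMap (EMap y x (phiInvMap s)) + 1

namespace RigidityAux2
open RigidityAux

variable {y x x₁ x₂ : ℝ}

lemma EMap_pos (hy0 : 0 < y) (hy1 : y < 1) (hx : 1 < x) {t : ℝ} (ht : 1 ≤ t) :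
    1 ≤ EMap y x t ∨ x ≤ EMap y x t := by
  rcases lt_or_ge t (x/(x-1)) with h | h
  · exact Or.inr (EMap_first_ge hy0 hy1 hx ht h)
  · exact Or.inl (EMap_second_ge_one hy0 hy1 hx h)

lemma DFun_pos (hy0 : 0 < y) (hy1 : y < 1) (hx : 1 < x) {s : ℝ} (hs : s ∈ Set.Ico (0:ℝ) 1) :
    0 < DFun y x s := by
  have ht : 1 ≤ phiInvMap s := one_le_phiInvMap hs.1 hs.2
  unfold DFun
  split_ifs with h
  · exact lt_of_lt_of_le (phiMap_pos hx)
      (phiMap_le_phiMap (by linarith) (EMap_first_ge hy0 hy1 hx ht h))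
  · have := phiMap_nonneg (EMap_second_ge_one hy0 hy1 hx (not_lt.1 h))
    linarith

lemma DFun_lt (hy0 : 0 < y) (hy1 : y < 1) (hx : 1 < x) {s : ℝ} (hs : s ∈ Set.Ico (0:ℝ) 1) :
    DFun y x s < s + 1 := by
  have ht : 1 ≤ phiInvMap s := one_le_phiInvMap hs.1 hs.2
  unfold DFun
  split_ifs with h
  · have hE : (1:ℝ) ≤ EMap y x (phiInvMap s) :=
      le_trans (le_of_lt hx) (EMap_first_ge hy0 hy1 hx ht h)
    have := phiMap_lt_one (by linarith : (0:ℝ) < EMap y x (phiInvMap s))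
    linarith [hs.1]
  · have hE1 : (1:ℝ) ≤ EMap y x (phiInvMap s) := EMap_second_ge_one hy0 hy1 hx (not_lt.1 h)
    have hEt : EMap y x (phiInvMap s) < phiInvMap s := EMap_second_lt_t hy0 hy1 hx (not_lt.1 h)
    have := phiMap_lt_phiMap (by linarith : (0:ℝ) < EMap y x (phiInvMap s)) hEt
    rw [phiMap_phiInvMap hs.2] at this
    linarith

lemma DFun_zero (hy0 : 0 < y) (hy1 : y < 1) (hx : 1 < x) : DFun y x 0 = phiMap x := by
  unfold DFun
  rw [phiInvMap_zero, if_pos (one_lt_xp hx), EMap_one hy1 hx]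

/-- branch characterization via the value of `phiMap (EMap ...)`. -/
lemma psi_ge_iff (hy0 : 0 < y) (hy1 : y < 1) (hx : 1 < x) {s : ℝ} (hs : s ∈ Set.Ico (0:ℝ) 1) :
    (phiInvMap s < x/(x-1) → phiMap x ≤ phiMap (EMap y x (phiInvMap s)))
    ∧ (x/(x-1) ≤ phiInvMap s → phiMap (EMap y x (phiInvMap s)) < phiMap x) := by
  have ht : 1 ≤ phiInvMap s := one_le_phiInvMap hs.1 hs.2
  constructor
  · intro h
    exact phiMap_le_phiMap (by linarith) (EMap_first_ge hy0 hy1 hx ht h)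
  · intro h
    have h1 : (1:ℝ) ≤ EMap y x (phiInvMap s) := EMap_second_ge_one hy0 hy1 hx h
    exact phiMap_lt_phiMap (by linarith) (EMap_second_lt_x hy0 hy1 hx h)

lemma DFun_mono (hy0 : 0 < y) (hy1 : y < 1) (hx₁ : 1 < x₁) (h12 : x₁ < x₂)
    {s : ℝ} (hs : s ∈ Set.Ico (0:ℝ) 1) : DFun y x₁ s < DFun y x₂ s := by
  have hx₂ : 1 < x₂ := lt_trans hx₁ h12
  have ht : 1 ≤ phiInvMap s := one_le_phiInvMap hs.1 hs.2
  set t := phiInvMap s with htdef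
  unfold DFun
  rcases lt_or_ge t (x₂/(x₂-1)) with h2 | h2
  · have h1 : t < x₁/(x₁-1) := lt_trans h2 (xp_anti hx₁ h12)
    rw [if_pos h1, if_pos h2]
    have hE₁ : x₁ ≤ EMap y x₁ t := EMap_first_ge hy0 hy1 hx₁ ht h1
    exact phiMap_lt_phiMap (by linarith) (EMap_first_mono hy0 hy1 hx₁ h12 ht h2)
  · rcases lt_or_ge t (x₁/(x₁-1)) with h1 | h1
    · rw [if_pos h1, if_neg (not_lt.2 h2)]
      have hE₁pos : (0:ℝ) < EMap y x₁ t := by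
        have := EMap_first_ge hy0 hy1 hx₁ ht h1; linarith
      have hlt := phiMap_lt_one hE₁pos
      have hge := phiMap_nonneg (EMap_second_ge_one hy0 hy1 hx₂ h2)
      linarith
    · rw [if_neg (not_lt.2 h1), if_neg (not_lt.2 h2)]
      have hE₁ : (1:ℝ) ≤ EMap y x₁ t := EMap_second_ge_one hy0 hy1 hx₁ h1
      have := phiMap_lt_phiMap (by linarith) (EMap_second_mono hy0 hy1 hx₁ h12 h1)
      linarith

end RigidityAux2

namespace RigidityAux3
open RigidityAux RigidityAux2

lemma EHat_coe (y x : ℝ) {s : ℝ} (hs : s ∈ Set.Ico (0:ℝ) 1) :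
    EHat y x (↑s : UnitAddCircle) = ((phiMap (EMap y x (phiInvMap s)) : ℝ) : UnitAddCircle) := by
  unfold EHat
  congr 3
  rw [AddCircle.coe_equivIco_mk_apply]
  simp [Int.fract_eq_self.2 ⟨hs.1, hs.2⟩]

lemma coe_eq_coe {a b : ℝ} (h : (↑a : UnitAddCircle) = ↑b) : ∃ n : ℤ, a = b + n := by
  rw [QuotientAddGroup.eq_iff_sub_mem, AddSubgroup.mem_zmultiples_iff] at h
  obtain ⟨n, hn⟩ := h
  rw [zsmul_eq_mul, mul_one] at hn
  exact ⟨n, by linarith⟩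

lemma lift_add_int {F : ℝ → ℝ} (hper : ∀ s : ℝ, F (s + 1) = F s + 1) :
    ∀ (n : ℤ) (s : ℝ), F (s + n) = F s + n := by
  intro n
  induction n using Int.induction_on with
  | zero => simp
  | succ m ih =>
    intro s
    have h1 : s + ((m : ℤ) + 1 : ℤ) = (s + (m:ℤ)) + 1 := by push_cast; ring
    rw [h1, hper, ih]
    push_cast; ring
  | pred m ih =>
    intro s
    have h1 : (s + (-(m:ℤ) - 1 : ℤ)) + 1 = s + (-(m:ℤ) : ℤ) := by push_cast; ring
    have := hper (s + (-(m:ℤ) - 1 : ℤ))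
    rw [h1, ih] at this
    push_cast at this ⊢
    linarith

variable {y x : ℝ}

lemma lift_k (hy0 : 0 < y) (hy1 : y < 1) (hx : 1 < x)
    {F : ℝ → ℝ} (hF : IsLiftOf F (EHat y x)) : ∃ k : ℤ, F 0 = phiMap x + k := by
  have h0 := hF.2 0
  rw [EHat_coe y x (by norm_num : (0:ℝ) ∈ Set.Ico (0:ℝ) 1)] at h0
  rw [phiInvMap_zero, EMap_one hy1 hx] at h0
  exact coe_eq_coe h0

lemma lift_formula (hy0 : 0 < y) (hy1 : y < 1) (hx : 1 < x)
    {F : ℝ → ℝ} (hF : IsLiftOf F (EHat y x)) {k : ℤ} (hk : F 0 = phiMap x + k) :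
    ∀ s ∈ Set.Ico (0:ℝ) 1, F s = DFun y x s + k := by
  intro s hs
  obtain ⟨n, hn⟩ : ∃ n : ℤ, F s = phiMap (EMap y x (phiInvMap s)) + n := by
    have h0 := hF.2 s
    rw [EHat_coe y x hs] at h0
    exact coe_eq_coe h0
  set ψ := phiMap (EMap y x (phiInvMap s)) with hψ
  have hmono : StrictMono F := hF.1.2.1
  have hlow : F 0 ≤ F s := hmono.monotone hs.1
  have hhigh : F s < F 0 + 1 := by
    have ha : F s < F 1 := hmono hs.2
    have hb : F (0 + 1) = F 0 + 1 := hF.1.2.2.2 0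
    rw [show (0:ℝ) + 1 = 1 by norm_num] at hb
    linarith
  rw [hk] at hlow hhigh
  have hφx0 : 0 < phiMap x := phiMap_pos hx
  have hφx1 : phiMap x < 1 := phiMap_lt_one (by linarith)
  have hbr := psi_ge_iff hy0 hy1 hx hs
  have ht : 1 ≤ phiInvMap s := one_le_phiInvMap hs.1 hs.2
  unfold DFun
  rcases lt_or_ge (phiInvMap s) (x/(x-1)) with h | h
  · -- first branch : n = k
    have hψge : phiMap x ≤ ψ := hbr.1 h
    have hψlt : ψ < 1 := by
      have hE : (1:ℝ) ≤ EMap y x (phiInvMap s) :=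
        le_trans (le_of_lt hx) (EMap_first_ge hy0 hy1 hx ht h)
      exact phiMap_lt_one (by linarith)
    have hnk : n = k := by
      have h1 : (k:ℝ) - 1 < n := by rw [hn] at hlow; linarith
      have h2 : (n:ℝ) < k + 1 := by rw [hn] at hhigh; linarith
      have h1' : k - 1 < n := by exact_mod_cast h1
      have h2' : n < k + 1 := by exact_mod_cast h2
      omega
    rw [if_pos h, hn, hnk]
  · -- second branch : n = k + 1
    have hψlt : ψ < phiMap x := hbr.2 h
    have hψge : 0 ≤ ψ := phiMap_nonneg (EMap_second_ge_one hy0 hy1 hx h)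
    have hnk : n = k + 1 := by
      have h1 : (k:ℝ) < n := by rw [hn] at hlow; linarith
      have h2 : (n:ℝ) < k + 2 := by rw [hn] at hhigh; linarith
      have h1' : k < n := by exact_mod_cast h1
      have h2' : n < k + 2 := by exact_mod_cast h2
      omega
    rw [if_neg (not_lt.2 h), hn, hnk]
    push_cast
    ring

lemma lift_decomp (hy0 : 0 < y) (hy1 : y < 1) (hx : 1 < x)
    {F : ℝ → ℝ} (hF : IsLiftOf F (EHat y x)) {k : ℤ} (hk : F 0 = phiMap x + k) :
    ∀ s : ℝ, F s = DFun y x (Int.fract s) + k + ⌊s⌋ := by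
  intro s
  have hfr : Int.fract s ∈ Set.Ico (0:ℝ) 1 := ⟨Int.fract_nonneg s, Int.fract_lt_one s⟩
  have h1 : F s = F (Int.fract s) + ⌊s⌋ := by
    have := lift_add_int hF.1.2.2.2 ⌊s⌋ (Int.fract s)
    rw [Int.fract_add_floor] at this
    exact this
  rw [h1, lift_formula hy0 hy1 hx hF hk _ hfr]

lemma lift_bounds (hy0 : 0 < y) (hy1 : y < 1) (hx : 1 < x)
    {F : ℝ → ℝ} (hF : IsLiftOf F (EHat y x)) {k : ℤ} (hk : F 0 = phiMap x + k) (s : ℝ) :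
    (⌊s⌋ : ℝ) < F s - k ∧ F s - k < s + 1 := by
  have hfr : Int.fract s ∈ Set.Ico (0:ℝ) 1 := ⟨Int.fract_nonneg s, Int.fract_lt_one s⟩
  have hd := lift_decomp hy0 hy1 hx hF hk s
  have hpos := DFun_pos hy0 hy1 hx hfr
  have hlt := DFun_lt hy0 hy1 hx hfr
  have hfl : Int.fract s + ⌊s⌋ = s := Int.fract_add_floor s
  constructor <;> [skip; skip] <;> rw [hd] <;> linarith

end RigidityAux3

namespace RigidityMain
open RigidityAux RigidityAux2 RigidityAux3

lemma H_iter {F : ℝ → ℝ} (hper : ∀ s : ℝ, F (s + 1) = F s + 1) (k : ℤ) :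
    ∀ (n : ℕ) (s : ℝ), (fun u => F u - k)^[n] s = F^[n] s - (n : ℝ) * k := by
  intro n
  induction n with
  | zero => intro s; simp
  | succ m ih =>
    intro s
    rw [Function.iterate_succ_apply', Function.iterate_succ_apply', ih]
    show F (F^[m] s - (m:ℝ) * k) - k = _
    have h1 : F^[m] s - (m:ℝ) * k = F^[m] s + ((-(m * k) : ℤ) : ℝ) := by push_cast; ring
    rw [h1, lift_add_int hper (-(m*k)) (F^[m] s)]
    push_cast; ring

lemma compare_pointwise {y x₁ x₂ : ℝ} (hy0 : 0 < y) (hy1 : y < 1)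
    (hx₁ : 1 < x₁) (h12 : x₁ < x₂)
    {F₁ F₂ : ℝ → ℝ} (h₁ : IsLiftOf F₁ (EHat y x₁)) (h₂ : IsLiftOf F₂ (EHat y x₂))
    {k₁ k₂ : ℤ} (hk₁ : F₁ 0 = phiMap x₁ + k₁) (hk₂ : F₂ 0 = phiMap x₂ + k₂) (s : ℝ) :
    F₁ s - k₁ < F₂ s - k₂ := by
  have hfr : Int.fract s ∈ Set.Ico (0:ℝ) 1 := ⟨Int.fract_nonneg s, Int.fract_lt_one s⟩
  have d₁ := lift_decomp hy0 hy1 hx₁ h₁ hk₁ s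
  have d₂ := lift_decomp hy0 hy1 (lt_trans hx₁ h12) h₂ hk₂ s
  have := DFun_mono hy0 hy1 hx₁ h12 hfr
  rw [d₁, d₂]; linarith

/-- The central contradiction in the asymmetric case `x₁ < x₂`. -/
lemma main_contra {y x₁ x₂ : ℝ} (hy0 : 0 < y) (hy1 : y < 1)
    (hx₁ : 1 < x₁) (h12 : x₁ < x₂)
    (p : ℤ) (q : ℕ) (hq : 1 ≤ q)
    {F₁ F₂ : ℝ → ℝ} (h₁ : IsLiftOf F₁ (EHat y x₁)) (h₂ : IsLiftOf F₂ (EHat y x₂))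
    (hF₁ : F₁^[q] 0 = (p : ℝ)) (hF₂ : F₂^[q] 0 = (p : ℝ)) : False := by
  have hx₂ : 1 < x₂ := lt_trans hx₁ h12
  obtain ⟨k₁, hk₁⟩ := lift_k hy0 hy1 hx₁ h₁
  obtain ⟨k₂, hk₂⟩ := lift_k hy0 hy1 hx₂ h₂
  set H₁ : ℝ → ℝ := fun u => F₁ u - k₁ with hH₁
  set H₂ : ℝ → ℝ := fun u => F₂ u - k₂ with hH₂
  -- bounds for each map
  have bounds : ∀ (x : ℝ), 1 < x → ∀ (F : ℝ → ℝ), IsLiftOf F (EHat y x) → ∀ (k : ℤ),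
      F 0 = phiMap x + k → ∀ n : ℕ, 1 ≤ n →
      0 < (fun u => F u - k)^[n] 0 ∧ (fun u => F u - k)^[n] 0 < n := by
    intro x hx F hF k hk n hn
    induction n with
    | zero => omega
    | succ m ih =>
      rcases Nat.eq_or_lt_of_le hn with h | h
      · -- m + 1 = 1
        have hm : m = 0 := by omega
        subst hm
        rw [Function.iterate_succ_apply', Function.iterate_zero_apply]
        have h0 : F 0 - (k:ℝ) = phiMap x := by rw [hk]; ring
        constructor
        · show 0 < F 0 - (k:ℝ); rw [h0]; exact phiMap_pos hx
        · show F 0 - (k:ℝ) < ((0+1 : ℕ) : ℝ)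
          rw [h0]; have := phiMap_lt_one (by linarith : (0:ℝ) < x); push_cast; linarith
      · have hm : 1 ≤ m := by omega
        obtain ⟨ihp, ihl⟩ := ih hm
        rw [Function.iterate_succ_apply']
        set u := (fun u => F u - (k:ℝ))^[m] 0 with hu
        have hb := lift_bounds hy0 hy1 hx hF hk u
        have hfl : (0:ℝ) ≤ ⌊u⌋ := by
          have : (0:ℤ) ≤ ⌊u⌋ := Int.floor_nonneg.2 ihp.le
          exact_mod_cast this
        constructor
        · show 0 < F u - (k:ℝ); linarith [hb.1]
        · show F u - (k:ℝ) < ((m+1 : ℕ) : ℝ)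
          have h3 : F u - (k:ℝ) < u + 1 := hb.2
          push_cast
          linarith
  have b₁ := bounds x₁ hx₁ F₁ h₁ k₁ hk₁ q hq
  have b₂ := bounds x₂ hx₂ F₂ h₂ k₂ hk₂ q hq
  -- comparison of iterates
  have cmp : ∀ n : ℕ, 1 ≤ n → H₁^[n] 0 < H₂^[n] 0 := by
    intro n hn
    induction n with
    | zero => omega
    | succ m ih =>
      rcases Nat.eq_or_lt_of_le hn with h | h
      · have hm : m = 0 := by omega
        subst hm
        rw [Function.iterate_succ_apply', Function.iterate_succ_apply',
          Function.iterate_zero_apply, Function.iterate_zero_apply]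
        exact compare_pointwise hy0 hy1 hx₁ h12 h₁ h₂ hk₁ hk₂ 0
      · have hm : 1 ≤ m := by omega
        have ihm := ih hm
        rw [Function.iterate_succ_apply', Function.iterate_succ_apply']
        have step1 : H₁ (H₁^[m] 0) < H₂ (H₁^[m] 0) :=
          compare_pointwise hy0 hy1 hx₁ h12 h₁ h₂ hk₁ hk₂ _
        have hmono₂ : StrictMono H₂ := by
          intro a b hab
          show F₂ a - (k₂:ℝ) < F₂ b - (k₂:ℝ)
          have := h₂.1.2.1 hab
          linarith
        exact lt_trans step1 (hmono₂ ihm)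
  -- put together
  have e₁ : H₁^[q] 0 = (p : ℝ) - (q : ℝ) * k₁ := by
    rw [hH₁, H_iter h₁.1.2.2.2 k₁ q 0, hF₁]
  have e₂ : H₂^[q] 0 = (p : ℝ) - (q : ℝ) * k₂ := by
    rw [hH₂, H_iter h₂.1.2.2.2 k₂ q 0, hF₂]
  set m₁ : ℤ := p - (q : ℤ) * k₁ with hm₁
  set m₂ : ℤ := p - (q : ℤ) * k₂ with hm₂
  have hm₁r : H₁^[q] 0 = (m₁ : ℝ) := by rw [e₁, hm₁]; push_cast; ring
  have hm₂r : H₂^[q] 0 = (m₂ : ℝ) := by rw [e₂, hm₂]; push_cast; ring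
  have hb₁ : 0 < m₁ ∧ m₁ < (q:ℤ) := by
    constructor
    · have := b₁.1; rw [hm₁r] at this; exact_mod_cast this
    · have := b₁.2; rw [hm₁r] at this; exact_mod_cast this
  have hb₂ : 0 < m₂ ∧ m₂ < (q:ℤ) := by
    constructor
    · have := b₂.1; rw [hm₂r] at this; exact_mod_cast this
    · have := b₂.2; rw [hm₂r] at this; exact_mod_cast this
  have hcmp : m₁ < m₂ := by
    have := cmp q hq
    rw [hm₁r, hm₂r] at this
    exact_mod_cast this
  -- m₂ - m₁ = q * (k₁ - k₂), with 0 < m₂ - m₁ < q : impossible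
  have hdiff : m₂ - m₁ = (q:ℤ) * (k₁ - k₂) := by rw [hm₁, hm₂]; ring
  set d : ℤ := k₁ - k₂ with hd
  have h1 : 0 < (q:ℤ) * d := by rw [← hdiff]; omega
  have h2 : (q:ℤ) * d < q := by rw [← hdiff]; omega
  have hq0 : 0 < (q:ℤ) := by exact_mod_cast hq
  have hd1 : 1 ≤ d := by
    by_contra hcon
    push_neg at hcon
    have : (q:ℤ) * d ≤ 0 := mul_nonpos_of_nonneg_of_nonpos hq0.le (by omega)
    omega
  have : (q:ℤ) * 1 ≤ (q:ℤ) * d := mul_le_mul_of_nonneg_left hd1 hq0.le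
  omega

end RigidityMain


/-- Rigidity: if for two parameters `x₁, x₂ ∈ (1,∞)` the marked point `0 mod 1` has under
`Ê_{x₁}` and `Ê_{x₂}` a periodic orbit of the same rotation number `p/q` (hence the same
cyclic order), witnessed by lifts `F₁, F₂` with `Fᵢ^q(0) = p`, then `x₁ = x₂`. -/
theorem rigidity_of_periodic_marked_orbit (θ : ℝ) (hθ : 0 < θ)
    (y : ℝ) (hy : y = 1 - Real.exp (-θ))
    (x₁ x₂ : ℝ) (hx₁ : x₁ ∈ Ioi (1:ℝ)) (hx₂ : x₂ ∈ Ioi (1:ℝ))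
    (p : ℤ) (q : ℕ) (hq : 1 ≤ q) (hpq : Int.gcd p (q : ℤ) = 1)
    (F₁ F₂ : ℝ → ℝ)
    (h₁ : IsLiftOf F₁ (EHat y x₁)) (h₂ : IsLiftOf F₂ (EHat y x₂))
    (hF₁ : F₁^[q] 0 = (p : ℝ)) (hF₂ : F₂^[q] 0 = (p : ℝ)) :
    x₁ = x₂ := by
  have hy0 : 0 < y := by
    rw [hy]
    have h1 : Real.exp (-θ) < 1 := Real.exp_lt_one_iff.2 (by linarith)
    linarith
  have hy1 : y < 1 := by
    rw [hy]
    have h1 : 0 < Real.exp (-θ) := Real.exp_pos _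
    linarith
  rcases lt_trichotomy x₁ x₂ with h | h | h
  · exact absurd (RigidityMain.main_contra hy0 hy1 hx₁ h p q hq h₁ h₂ hF₁ hF₂) not_false
  · exact h
  · exact absurd (RigidityMain.main_contra hy0 hy1 hx₂ h p q hq h₂ h₁ hF₂ hF₁) not_false
end

section
/- Let λ > 0 and u ∈ ℝ, let g : ℝ → ℝ be the orientation-preserving affine map g(t) = λt + u, and let I ⊆ ℝ be a nonempty open interval with g(I) = I such that g has no fixed point in I. Then exactly one of the following holds: (i) λ = 1, u ≠ 0 and I = ℝ; or (ii) λ ≠ 1 and I is an open half-line, I = (c, ∞) or I = (−∞, c), whose finite endpoint c = u/(1−λ) is the unique fixed point of g. In particular, I is never a bounded interval. -/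
open Set

private lemma pow_small_or (lam : ℝ) (_h0 : 0 < lam) (h1 : lam ≠ 1) {r : ℝ} (hr : 0 < r) :
    ∃ n : ℕ, lam ^ n ≤ r ∨ (lam⁻¹) ^ n ≤ r := by
  rcases h1.lt_or_gt with h | h
  · obtain ⟨n, hn⟩ := exists_pow_lt_of_lt_one hr h
    exact ⟨n, Or.inl hn.le⟩
  · obtain ⟨n, hn⟩ := exists_pow_lt_of_lt_one hr (inv_lt_one_of_one_lt₀ h)
    exact ⟨n, Or.inr hn.le⟩

private lemma pow_big_or (lam : ℝ) (h0 : 0 < lam) (h1 : lam ≠ 1) (r : ℝ) :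
    ∃ n : ℕ, r ≤ lam ^ n ∨ r ≤ (lam⁻¹) ^ n := by
  rcases h1.lt_or_gt with h | h
  · obtain ⟨n, hn⟩ := pow_unbounded_of_one_lt r ((one_lt_inv₀ h0).2 h)
    exact ⟨n, Or.inr hn.le⟩
  · obtain ⟨n, hn⟩ := pow_unbounded_of_one_lt r h
    exact ⟨n, Or.inl hn.le⟩

/-- Classification of affine circles: if `g(t) = λt + u` (with `λ > 0`) is an
orientation-preserving affine map and `I ⊆ ℝ` is a nonempty open interval (an open
order-connected set) with `g(I) = I` and no fixed point of `g` in `I`, then exactly one of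
the following holds: (i) `λ = 1`, `u ≠ 0` and `I = ℝ`; or (ii) `λ ≠ 1` and `I` is an open
half-line `(c, ∞)` or `(−∞, c)` whose finite endpoint `c = u/(1−λ)` is the unique fixed
point of `g`.  In particular `I` is never a bounded interval. -/
theorem affine_invariant_interval_dichotomy
    (lam u : ℝ) (hlam : 0 < lam) (I : Set ℝ)
    (hne : I.Nonempty) (hopen : IsOpen I) (hconn : I.OrdConnected)
    (himg : (fun t => lam * t + u) '' I = I)
    (hfix : ∀ t ∈ I, lam * t + u ≠ t) :
    ((lam = 1 ∧ u ≠ 0 ∧ I = univ) ∨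
      (lam ≠ 1 ∧ (I = Ioi (u / (1 - lam)) ∨ I = Iio (u / (1 - lam))) ∧
        ∀ t : ℝ, lam * t + u = t ↔ t = u / (1 - lam))) ∧
    ¬ (BddAbove I ∧ BddBelow I) := by
  obtain ⟨x, hx⟩ := hne
  have hlam' : lam ≠ 0 := ne_of_gt hlam
  have fwd : ∀ t ∈ I, lam * t + u ∈ I := fun t ht => himg ▸ Set.mem_image_of_mem _ ht
  have bwd : ∀ t ∈ I, (t - u) / lam ∈ I := by
    intro t ht
    rw [← himg] at ht
    obtain ⟨y, hy, hyt⟩ := ht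
    have hyt' : lam * y + u = t := hyt
    have : y = (t - u) / lam := by field_simp; linarith [hyt']
    rwa [← this]
  by_cases h1 : lam = 1
  · -- translation case
    subst h1
    simp only [one_mul] at fwd hfix
    have hu : u ≠ 0 := fun h => hfix x hx (by simp [h])
    have fo : ∀ n : ℕ, x + n * u ∈ I := by
      intro n
      induction n with
      | zero => simpa using hx
      | succ n ih =>
        have := fwd _ ih
        have h2 : x + n * u + u = x + (n + 1 : ℕ) * u := by push_cast; ring
        rwa [h2] at this
    have bo : ∀ n : ℕ, x - n * u ∈ I := by
      intro n
      induction n with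
      | zero => simpa using hx
      | succ n ih =>
        have := bwd _ ih
        simp only [one_mul, div_one] at this
        have h2 : x - n * u - u = x - (n + 1 : ℕ) * u := by push_cast; ring
        rwa [h2] at this
    have hI : I = univ := by
      ext z
      simp only [mem_univ, iff_true]
      rcases hu.lt_or_gt with hu' | hu'
      · -- u < 0 : forward decreases, backward increases
        obtain ⟨n, hn⟩ := exists_nat_ge ((x - z) / (-u))
        obtain ⟨m, hm⟩ := exists_nat_ge ((z - x) / (-u))
        have hp : x + n * u ≤ z := by
          have := (div_le_iff₀ (by linarith : (0:ℝ) < -u)).1 hn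
          linarith
        have hq : z ≤ x - m * u := by
          have := (div_le_iff₀ (by linarith : (0:ℝ) < -u)).1 hm
          linarith
        exact hconn.out (fo n) (bo m) ⟨hp, hq⟩
      · obtain ⟨n, hn⟩ := exists_nat_ge ((x - z) / u)
        obtain ⟨m, hm⟩ := exists_nat_ge ((z - x) / u)
        have hp : x - n * u ≤ z := by
          have := (div_le_iff₀ hu').1 hn
          linarith
        have hq : z ≤ x + m * u := by
          have := (div_le_iff₀ hu').1 hm
          linarith
        exact hconn.out (bo n) (fo m) ⟨hp, hq⟩
    refine ⟨Or.inl ⟨rfl, hu, hI⟩, ?_⟩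
    rintro ⟨hA, -⟩
    rw [hI] at hA
    exact not_bddAbove_univ hA
  · -- scaling case
    set c := u / (1 - lam) with hc
    have h1' : (1 : ℝ) - lam ≠ 0 := sub_ne_zero.mpr (Ne.symm h1)
    have hcfix : lam * c + u = c := by
      have e : c * (1 - lam) = u := by rw [hc]; exact div_mul_cancel₀ u h1'
      linear_combination -e
    have hiff : ∀ t : ℝ, lam * t + u = t ↔ t = c := by
      intro t
      constructor
      · intro h
        rw [hc, eq_div_iff h1']
        linear_combination -h
      · rintro rfl; exact hcfix
    have hcI : c ∉ I := fun h => hfix c h hcfix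
    -- orbits
    have fo : ∀ n : ℕ, lam ^ n * (x - c) + c ∈ I := by
      intro n
      induction n with
      | zero => simpa using hx
      | succ n ih =>
        have := fwd _ ih
        have h2 : lam * (lam ^ n * (x - c) + c) + u = lam ^ (n + 1) * (x - c) + c := by
          rw [pow_succ]; linarith [hcfix]
        rwa [h2] at this
    have bo : ∀ n : ℕ, (lam⁻¹) ^ n * (x - c) + c ∈ I := by
      intro n
      induction n with
      | zero => simpa using hx
      | succ n ih =>
        have := bwd _ ih
        have h2 : (lam⁻¹ ^ n * (x - c) + c - u) / lam = lam⁻¹ ^ (n + 1) * (x - c) + c := by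
          rw [div_eq_iff hlam']
          have h3 : lam⁻¹ ^ (n + 1) * (x - c) * lam = lam⁻¹ ^ n * (x - c) := by
            rw [pow_succ]; field_simp
          nlinarith [hcfix, h3]
        rwa [h2] at this
    have orbit : ∀ s : ℝ, (∃ n : ℕ, s = lam ^ n ∨ s = lam⁻¹ ^ n) → s * (x - c) + c ∈ I := by
      rintro s ⟨n, rfl | rfl⟩
      exacts [fo n, bo n]
    have hxc : x ≠ c := fun h => hcI (h ▸ hx)
    rcases hxc.lt_or_gt with hlt | hgt
    · -- x < c : claim I = Iio c
      have hsub : I ⊆ Iio c := by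
        intro y hy
        by_contra hyc
        simp only [mem_Iio, not_lt] at hyc
        have : c ∈ I := hconn.out hx hy ⟨hlt.le, hyc⟩
        exact hcI this
      have hd : x - c < 0 := by linarith
      have hIeq : I = Iio c := by
        refine Subset.antisymm hsub fun y hy => ?_
        simp only [mem_Iio] at hy
        have hr : 0 < (y - c) / (x - c) := div_pos_of_neg_of_neg (by linarith) hd
        obtain ⟨n, hn⟩ := pow_big_or lam hlam h1 ((y - c) / (x - c))
        obtain ⟨m, hm⟩ := pow_small_or lam hlam h1 hr
        -- big power s ≥ (y-c)/(x-c); since x-c<0 : s*(x-c) ≤ y-c, point ≤ y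
        have hps : ∃ s : ℝ, (∃ k : ℕ, s = lam ^ k ∨ s = lam⁻¹ ^ k) ∧ (y - c) / (x - c) ≤ s := by
          rcases hn with h | h
          exacts [⟨lam ^ n, ⟨n, Or.inl rfl⟩, h⟩, ⟨lam⁻¹ ^ n, ⟨n, Or.inr rfl⟩, h⟩]
        have hqs : ∃ s : ℝ, (∃ k : ℕ, s = lam ^ k ∨ s = lam⁻¹ ^ k) ∧ s ≤ (y - c) / (x - c) := by
          rcases hm with h | h
          exacts [⟨lam ^ m, ⟨m, Or.inl rfl⟩, h⟩, ⟨lam⁻¹ ^ m, ⟨m, Or.inr rfl⟩, h⟩]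
        obtain ⟨s, hsmem, hs⟩ := hps
        obtain ⟨s', hsmem', hs'⟩ := hqs
        have hp : s * (x - c) + c ≤ y := by
          have := (div_le_iff_of_neg hd).1 hs
          linarith
        have hq : y ≤ s' * (x - c) + c := by
          have := (le_div_iff_of_neg hd).1 hs'
          linarith
        exact hconn.out (orbit s hsmem) (orbit s' hsmem') ⟨hp, hq⟩
      refine ⟨Or.inr ⟨h1, Or.inr hIeq, hiff⟩, ?_⟩
      rintro ⟨-, hB⟩
      rw [hIeq] at hB
      exact not_bddBelow_Iio _ hB
    · -- x > c : claim I = Ioi c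
      have hsub : I ⊆ Ioi c := by
        intro y hy
        by_contra hyc
        simp only [mem_Ioi, not_lt] at hyc
        have : c ∈ I := hconn.out hy hx ⟨hyc, hgt.le⟩
        exact hcI this
      have hd : 0 < x - c := by linarith
      have hIeq : I = Ioi c := by
        refine Subset.antisymm hsub fun y hy => ?_
        simp only [mem_Ioi] at hy
        have hr : 0 < (y - c) / (x - c) := div_pos (by linarith) hd
        obtain ⟨n, hn⟩ := pow_big_or lam hlam h1 ((y - c) / (x - c))
        obtain ⟨m, hm⟩ := pow_small_or lam hlam h1 hr
        have hps : ∃ s : ℝ, (∃ k : ℕ, s = lam ^ k ∨ s = lam⁻¹ ^ k) ∧ (y - c) / (x - c) ≤ s := by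
          rcases hn with h | h
          exacts [⟨lam ^ n, ⟨n, Or.inl rfl⟩, h⟩, ⟨lam⁻¹ ^ n, ⟨n, Or.inr rfl⟩, h⟩]
        have hqs : ∃ s : ℝ, (∃ k : ℕ, s = lam ^ k ∨ s = lam⁻¹ ^ k) ∧ s ≤ (y - c) / (x - c) := by
          rcases hm with h | h
          exacts [⟨lam ^ m, ⟨m, Or.inl rfl⟩, h⟩, ⟨lam⁻¹ ^ m, ⟨m, Or.inr rfl⟩, h⟩]
        obtain ⟨s, hsmem, hs⟩ := hps
        obtain ⟨s', hsmem', hs'⟩ := hqs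
        have hq : y ≤ s * (x - c) + c := by
          have := (div_le_iff₀ hd).1 hs
          linarith
        have hp : s' * (x - c) + c ≤ y := by
          have h4 := mul_le_mul_of_nonneg_right hs' hd.le
          rw [div_mul_cancel₀ _ (ne_of_gt hd)] at h4
          linarith
        exact hconn.out (orbit s' hsmem') (orbit s hsmem) ⟨hp, hq⟩
      refine ⟨Or.inr ⟨h1, Or.inl hIeq, hiff⟩, ?_⟩
      rintro ⟨hA, -⟩
      rw [hIeq] at hA
      exact not_bddAbove_Ioi _ hA
end
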